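/- Let A and B be strictly positive definite m×m complex matrices. Define the linear map (A,B)# on m×m matrices by (A,B)#C = ∫₀¹ A^{1-s} C B^s ds, and the linear map (A,B)♯̂ by (A,B)♯̂C = ∫₀^∞ (A+xI)^{-1} C (B+xI)^{-1} dx. Then (A,B)♯̂ is the inverse of (A,B)#: for every m×m matrix C, (A,B)♯̂((A,B)#C) = C. -/

import Mathlib

open MeasureTheory Matrix
open scoped ComplexOrder

attribute [local instance] Matrix.frobeniusNormedAddCommGroup Matrix.frobeniusNormedSpace

variable {m : ℕ}

/-- `(A,B)#C = ∫₀¹ A^{1-s} C B^s ds`, with powers by functional calculus. -/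
noncomputable def matSharp (A B C : Matrix (Fin m) (Fin m) ℂ) : Matrix (Fin m) (Fin m) ℂ :=
  ∫ s in (0:ℝ)..1,
    cfc (fun t : ℝ => t ^ (1 - s)) A * C * cfc (fun t : ℝ => t ^ s) B

/-- `(A,B)♯̂C = ∫₀^∞ (A+xI)⁻¹ C (B+xI)⁻¹ dx`. -/
noncomputable def matSharpHat (A B C : Matrix (Fin m) (Fin m) ℂ) : Matrix (Fin m) (Fin m) ℂ :=
  ∫ x in Set.Ioi (0:ℝ), (A + (x : ℂ) • 1)⁻¹ * C * (B + (x : ℂ) • 1)⁻¹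

namespace MatSharpAux
open Set Filter Topology


lemma continuous_const_rpow {a : ℝ} (ha : 0 < a) : Continuous fun s : ℝ => a ^ s := by
  have : (fun s : ℝ => a ^ s) = fun s => Real.exp (Real.log a * s) :=
    funext fun s => Real.rpow_def_of_pos ha s
  rw [this]; fun_prop

lemma hasDerivAt_log_add {a : ℝ} (x : ℝ) (h : 0 < a + x) :
    HasDerivAt (fun y => Real.log (a + y)) ((a + x)⁻¹) x := by
  have := (Real.hasDerivAt_log h.ne').comp x ((hasDerivAt_id x).const_add a)
  simpa [Function.comp_def] using this

lemma tendsto_log_sub (a b : ℝ) :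
    Tendsto (fun y => Real.log (a + y) - Real.log (b + y)) atTop (𝓝 0) := by
  have h0 : Tendsto (fun y : ℝ => (a - b) * (b + y)⁻¹) atTop (𝓝 0) := by
    have := (tendsto_inv_atTop_zero.comp (tendsto_atTop_add_const_left atTop b tendsto_id)).const_mul (a - b)
    simpa using this
  have h1 : Tendsto (fun y : ℝ => 1 + (a - b) * (b + y)⁻¹) atTop (𝓝 1) := by
    simpa using h0.const_add 1
  have h2 : Tendsto (fun y : ℝ => Real.log (1 + (a - b) * (b + y)⁻¹)) atTop (𝓝 0) := by
    have := ((Real.continuousAt_log one_ne_zero).tendsto).comp h1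
    simpa [Function.comp_def] using this
  refine h2.congr' ?_
  filter_upwards [eventually_gt_atTop (max (-a) (-b))] with y hy
  have hay : 0 < a + y := by have := (max_lt_iff.mp hy).1; linarith
  have hby : 0 < b + y := by have := (max_lt_iff.mp hy).2; linarith
  rw [← Real.log_div hay.ne' hby.ne']
  congr 1
  field_simp
  ring

lemma nonneg_inv_mul {a b : ℝ} (ha : 0 < a) (hb : 0 < b) :
    ∀ x ∈ Ioi (0:ℝ), (0:ℝ) ≤ ((a + x) * (b + x))⁻¹ := by
  intro x hx
  have : (0:ℝ) < (a + x) * (b + x) := by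
    have hx' : 0 < x := hx
    positivity
  exact (inv_nonneg).mpr this.le

lemma hasDerivAt_ne {a b : ℝ} (ha : 0 < a) (hb : 0 < b) (hab : a ≠ b) :
    ∀ x ∈ Ici (0:ℝ), HasDerivAt (fun y => (b - a)⁻¹ * (Real.log (a + y) - Real.log (b + y)))
      (((a + x) * (b + x))⁻¹) x := by
  intro x hx
  have hx' : (0:ℝ) ≤ x := hx
  have hax : 0 < a + x := by linarith
  have hbx : 0 < b + x := by linarith
  have h := ((hasDerivAt_log_add x hax).sub (hasDerivAt_log_add x hbx)).const_mul ((b - a)⁻¹)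
  refine h.congr_deriv ?_
  have hba : b - a ≠ 0 := sub_ne_zero.mpr (Ne.symm hab)
  field_simp
  ring

lemma integral_inv_mul_ne {a b : ℝ} (ha : 0 < a) (hb : 0 < b) (hab : a ≠ b) :
    ∫ x in Ioi (0:ℝ), ((a + x) * (b + x))⁻¹
      = (b - a)⁻¹ * (Real.log b - Real.log a) := by
  have htend : Tendsto (fun y => (b - a)⁻¹ * (Real.log (a + y) - Real.log (b + y))) atTop (𝓝 0) := by
    simpa using (tendsto_log_sub a b).const_mul ((b - a)⁻¹)
  rw [integral_Ioi_of_hasDerivAt_of_nonneg' (hasDerivAt_ne ha hb hab)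
      (nonneg_inv_mul ha hb) htend]
  simp
  ring

lemma integrableOn_inv_mul {a b : ℝ} (ha : 0 < a) (hb : 0 < b) :
    IntegrableOn (fun x => ((a + x) * (b + x))⁻¹) (Ioi (0:ℝ)) := by
  rcases eq_or_ne a b with rfl | hab
  · have hderiv : ∀ x ∈ Ici (0:ℝ), HasDerivAt (fun y => -(a + y)⁻¹) (((a + x) * (a + x))⁻¹) x := by
      intro x hx
      have hx' : (0:ℝ) ≤ x := hx
      have hax : 0 < a + x := by linarith
      have h := (((hasDerivAt_id x).const_add a).inv hax.ne').neg
      refine h.congr_deriv ?_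
      simp only [id]
      field_simp
    have htend : Tendsto (fun y : ℝ => -(a + y)⁻¹) atTop (𝓝 0) := by
      have := (tendsto_inv_atTop_zero.comp (tendsto_atTop_add_const_left atTop a tendsto_id)).neg
      simpa using this
    exact integrableOn_Ioi_deriv_of_nonneg' hderiv (nonneg_inv_mul ha ha) htend
  · exact integrableOn_Ioi_deriv_of_nonneg' (hasDerivAt_ne ha hb hab)
      (nonneg_inv_mul ha hb) (by simpa using (tendsto_log_sub a b).const_mul ((b - a)⁻¹))

lemma integral_inv_mul_same {a : ℝ} (ha : 0 < a) :
    ∫ x in Ioi (0:ℝ), ((a + x) * (a + x))⁻¹ = a⁻¹ := by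
  have hderiv : ∀ x ∈ Ici (0:ℝ), HasDerivAt (fun y => -(a + y)⁻¹) (((a + x) * (a + x))⁻¹) x := by
    intro x hx
    have hx' : (0:ℝ) ≤ x := hx
    have hax : 0 < a + x := by linarith
    have h := (((hasDerivAt_id x).const_add a).inv hax.ne').neg
    refine h.congr_deriv ?_
    simp only [id]
    field_simp
  have htend : Tendsto (fun y : ℝ => -(a + y)⁻¹) atTop (𝓝 0) := by
    have := (tendsto_inv_atTop_zero.comp (tendsto_atTop_add_const_left atTop a tendsto_id)).neg
    simpa using this
  rw [integral_Ioi_of_hasDerivAt_of_nonneg' hderiv (nonneg_inv_mul ha ha) htend]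
  simp

lemma integral_rpow_mix {a b : ℝ} (ha : 0 < a) (hb : 0 < b) (hab : a ≠ b) :
    ∫ s in (0:ℝ)..1, a ^ (1 - s) * b ^ s
      = (b - a) / (Real.log b - Real.log a) := by
  set c := Real.log b - Real.log a with hc
  have hcne : c ≠ 0 := by
    intro h
    exact hab (Real.log_injOn_pos (Set.mem_Ioi.mpr ha) (Set.mem_Ioi.mpr hb)
      (by linarith [sub_eq_zero.mp h]))
  have heq : ∀ s : ℝ, a ^ (1 - s) * b ^ s = a * Real.exp (s * c) := by
    intro s
    rw [Real.rpow_def_of_pos ha, Real.rpow_def_of_pos hb, ← Real.exp_add, hc]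
    conv_rhs => rw [← Real.exp_log ha]
    rw [← Real.exp_add]
    congr 1
    rw [Real.log_exp]
    ring
  have hderiv : ∀ s ∈ Set.uIcc (0:ℝ) 1,
      HasDerivAt (fun s => a / c * Real.exp (s * c)) (a * Real.exp (s * c)) s := by
    intro s _
    have h := ((Real.hasDerivAt_exp (s * c)).comp s ((hasDerivAt_id s).mul_const c)).const_mul (a / c)
    refine h.congr_deriv ?_
    field_simp
  have hint : IntervalIntegrable (fun s => a * Real.exp (s * c)) MeasureTheory.volume 0 1 :=
    (by fun_prop : Continuous fun s : ℝ => a * Real.exp (s * c)).intervalIntegrable 0 1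
  calc ∫ s in (0:ℝ)..1, a ^ (1 - s) * b ^ s
      = ∫ s in (0:ℝ)..1, a * Real.exp (s * c) := by
        simp_rw [heq]
    _ = a / c * Real.exp (1 * c) - a / c * Real.exp (0 * c) :=
        intervalIntegral.integral_eq_sub_of_hasDerivAt hderiv hint
    _ = (b - a) / c := by
        rw [one_mul, zero_mul, Real.exp_zero, hc, Real.exp_sub, Real.exp_log ha, Real.exp_log hb]
        field_simp

lemma key_scalar {a b : ℝ} (ha : 0 < a) (hb : 0 < b) :
    (∫ x in Ioi (0:ℝ), ((a + x) * (b + x))⁻¹) * (∫ s in (0:ℝ)..1, a ^ (1 - s) * b ^ s) = 1 := by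
  rcases eq_or_ne a b with rfl | hab
  · rw [integral_inv_mul_same ha]
    have : ∀ s : ℝ, a ^ (1 - s) * a ^ s = a := by
      intro s
      rw [← Real.rpow_add ha]
      simp
    simp_rw [this]
    simp
    exact inv_mul_cancel₀ ha.ne'
  · rw [integral_inv_mul_ne ha hb hab, integral_rpow_mix ha hb hab]
    have hba : b - a ≠ 0 := sub_ne_zero.mpr (Ne.symm hab)
    have hcne : Real.log b - Real.log a ≠ 0 := by
      intro h
      exact hab (Real.log_injOn_pos (Set.mem_Ioi.mpr ha) (Set.mem_Ioi.mpr hb)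
        (by linarith [sub_eq_zero.mp h]))
    field_simp



variable {m : ℕ}

lemma diag_mul_mul_diag (d e : Fin m → ℂ) (X : Matrix (Fin m) (Fin m) ℂ) :
    diagonal d * X * diagonal e
      = ∑ i, ∑ j, (d i * e j) • single i j (X i j) := by
  ext p q
  simp [Matrix.sum_apply, single, diagonal_mul, mul_diagonal, Finset.sum_ite_eq,
    ite_and, mul_comm, mul_left_comm, mul_assoc]

lemma conj_mul_conj (u v X : Matrix (Fin m) (Fin m) ℂ) (d e : Fin m → ℂ) :
    u * diagonal d * star u * X * (v * diagonal e * star v)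
      = ∑ i, ∑ j, (d i * e j) • (u * single i j ((star u * X * v) i j) * star v) := by
  have h : u * diagonal d * star u * X * (v * diagonal e * star v)
      = u * (diagonal d * (star u * X * v) * diagonal e) * star v := by
    simp only [Matrix.mul_assoc]
  rw [h, diag_mul_mul_diag]
  simp only [Matrix.mul_sum, Matrix.sum_mul]
  refine Finset.sum_congr rfl fun i _ => Finset.sum_congr rfl fun j _ => ?_
  rw [Matrix.mul_smul, Matrix.smul_mul]

lemma sum_smul_collect (u v : Matrix (Fin m) (Fin m) ℂ) (c w : Fin m → Fin m → ℂ) :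
    ∑ i, ∑ j, c i j • (u * single i j (w i j) * star v)
      = u * Matrix.of (fun i j => c i j * w i j) * star v := by
  have h : ∀ i j, c i j • (u * single i j (w i j) * star v)
      = u * single i j (c i j * w i j) * star v := by
    intro i j
    have h2 := smul_single (c i j) i j (w i j)
    rw [smul_eq_mul] at h2
    rw [← h2, Matrix.mul_smul, Matrix.smul_mul]
  simp_rw [h]
  conv_rhs => rw [matrix_eq_sum_single (Matrix.of (fun i j => c i j * w i j))]
  simp [Matrix.mul_sum, Matrix.sum_mul]

lemma conj_add_smul_one_inv (u : Matrix (Fin m) (Fin m) ℂ)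
    (hu : u * star u = 1) (hu' : star u * u = 1)
    (d : Fin m → ℝ) (hd : ∀ i, 0 < d i) (x : ℝ) (hx : 0 ≤ x) :
    (u * diagonal (fun i => ((d i : ℝ) : ℂ)) * star u + (x : ℂ) • 1)⁻¹
      = u * diagonal (fun i => (((d i + x : ℝ) : ℂ))⁻¹) * star u := by
  have hne : ∀ i, ((d i + x : ℝ) : ℂ) ≠ 0 := by
    intro i
    have : (0:ℝ) < d i + x := by linarith [hd i]
    exact_mod_cast this.ne'
  have h1 : u * diagonal (fun i => ((d i : ℝ) : ℂ)) * star u + (x : ℂ) • 1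
      = u * diagonal (fun i => ((d i + x : ℝ) : ℂ)) * star u := by
    have hx1 : (x : ℂ) • (1 : Matrix (Fin m) (Fin m) ℂ) = u * ((x : ℂ) • 1) * star u := by
      rw [Matrix.mul_smul, mul_one, Matrix.smul_mul, hu]
    rw [hx1, ← Matrix.add_mul, ← Matrix.mul_add]
    congr 2
    rw [Matrix.smul_one_eq_diagonal, diagonal_add]
    ext i
    push_cast
    ring
  rw [h1]
  apply Matrix.inv_eq_right_inv
  calc u * diagonal (fun i => ((d i + x : ℝ) : ℂ)) * star u
        * (u * diagonal (fun i => (((d i + x : ℝ) : ℂ))⁻¹) * star u)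
      = u * (diagonal (fun i => ((d i + x : ℝ) : ℂ))
          * diagonal (fun i => (((d i + x : ℝ) : ℂ))⁻¹)) * star u := by
        have h3 : ∀ Y : Matrix (Fin m) (Fin m) ℂ, star u * (u * Y) = Y := by
          intro Y; rw [← Matrix.mul_assoc, hu', one_mul]
        simp only [Matrix.mul_assoc, h3]
    _ = 1 := by
        rw [diagonal_mul_diagonal]
        have : (fun i => ((d i + x : ℝ) : ℂ) * (((d i + x : ℝ) : ℂ))⁻¹) = fun _ => 1 := by
          ext i; exact mul_inv_cancel₀ (hne i)
        rw [this, diagonal_one, mul_one, hu]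

lemma unconj (u v Y : Matrix (Fin m) (Fin m) ℂ)
    (hu' : star u * u = 1) (hv' : star v * v = 1) :
    star u * (u * Y * star v) * v = Y := by
  calc star u * (u * Y * star v) * v = star u * u * (Y * (star v * v)) := by
        simp only [Matrix.mul_assoc]
    _ = Y := by rw [hu', hv', one_mul, mul_one]


theorem aux (A B : Matrix (Fin m) (Fin m) ℂ) (u v : Matrix (Fin m) (Fin m) ℂ)
    (a b : Fin m → ℝ)
    (hu : u * star u = 1) (hu' : star u * u = 1)
    (hv : v * star v = 1) (hv' : star v * v = 1)
    (hapos : ∀ i, 0 < a i) (hbpos : ∀ i, 0 < b i)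
    (hAeq : A = u * diagonal (fun i => ((a i : ℝ) : ℂ)) * star u)
    (hBeq : B = v * diagonal (fun i => ((b i : ℝ) : ℂ)) * star v)
    (hcfcA : ∀ f : ℝ → ℝ, cfc f A = u * diagonal (fun i => ((f (a i) : ℝ) : ℂ)) * star u)
    (hcfcB : ∀ f : ℝ → ℝ, cfc f B = v * diagonal (fun i => ((f (b i) : ℝ) : ℂ)) * star v)
    (C : Matrix (Fin m) (Fin m) ℂ) :
    matSharpHat A B (matSharp A B C) = C := by
  classical
  set D : Matrix (Fin m) (Fin m) ℂ := star u * C * v with hD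
  set κ₁ : Fin m → Fin m → ℝ := fun i j => ∫ s in (0:ℝ)..1, a i ^ (1 - s) * b j ^ s with hκ₁
  set κ₂ : Fin m → Fin m → ℝ :=
    fun i j => ∫ x in Set.Ioi (0:ℝ), ((a i + x) * (b j + x))⁻¹ with hκ₂
  set Y : Matrix (Fin m) (Fin m) ℂ := Matrix.of (fun i j => (κ₁ i j : ℂ) * D i j) with hY
  -- the # step
  have hsharp : matSharp A B C = u * Y * star v := by
    have hfun : ∀ s : ℝ,
        cfc (fun t : ℝ => t ^ (1 - s)) A * C * cfc (fun t : ℝ => t ^ s) B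
          = ∑ i, ∑ j, ((a i ^ (1 - s) * b j ^ s : ℝ) : ℂ) •
              (u * single i j (D i j) * star v) := by
      intro s
      rw [hcfcA (fun t => t ^ (1 - s)), hcfcB (fun t => t ^ s),
        conj_mul_conj u v C (fun i => ((a i ^ (1 - s) : ℝ) : ℂ))
          (fun j => ((b j ^ s : ℝ) : ℂ))]
      refine Finset.sum_congr rfl fun i _ => Finset.sum_congr rfl fun j _ => ?_
      rw [Complex.ofReal_mul]
    have hcont : ∀ i j : Fin m,
        Continuous fun s : ℝ => ((a i ^ (1 - s) * b j ^ s : ℝ) : ℂ) := by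
      intro i j
      exact Complex.continuous_ofReal.comp
        (((continuous_const_rpow (hapos i)).comp
            (continuous_const.sub continuous_id)).mul (continuous_const_rpow (hbpos j)))
    rw [matSharp]
    simp_rw [hfun]
    calc (∫ s in (0:ℝ)..1, ∑ i, ∑ j, ((a i ^ (1 - s) * b j ^ s : ℝ) : ℂ) •
            (u * single i j (D i j) * star v))
        = ∑ i, ∑ j, (∫ s in (0:ℝ)..1, ((a i ^ (1 - s) * b j ^ s : ℝ) : ℂ)) •
            (u * single i j (D i j) * star v) := by
          rw [intervalIntegral.integral_finset_sum (f := fun i s => ∑ j, ((a i ^ (1 - s) * b j ^ s : ℝ) : ℂ) •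
              (u * single i j (D i j) * star v)) (fun i _ =>
            ((continuous_finset_sum _ (fun j _ => (hcont i j).smul
              continuous_const)).intervalIntegrable 0 1))]
          refine Finset.sum_congr rfl fun i _ => ?_
          rw [intervalIntegral.integral_finset_sum (f := fun j s => ((a i ^ (1 - s) * b j ^ s : ℝ) : ℂ) •
              (u * single i j (D i j) * star v)) (fun j _ =>
            (((hcont i j).smul continuous_const).intervalIntegrable 0 1))]
          refine Finset.sum_congr rfl fun j _ => ?_
          exact intervalIntegral.integral_smul_const _ _
      _ = ∑ i, ∑ j, ((κ₁ i j : ℝ) : ℂ) • (u * single i j (D i j) * star v) := by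
          refine Finset.sum_congr rfl fun i _ => Finset.sum_congr rfl fun j _ => ?_
          congr 1
          exact intervalIntegral.integral_ofReal
      _ = u * Y * star v := sum_smul_collect u v _ _
  -- the ♯̂ step
  have hfun2 : ∀ x ∈ Set.Ioi (0:ℝ),
      (A + (x : ℂ) • 1)⁻¹ * (u * Y * star v) * (B + (x : ℂ) • 1)⁻¹
        = ∑ i, ∑ j, ((((a i + x) * (b j + x))⁻¹ : ℝ) : ℂ) •
            (u * single i j (Y i j) * star v) := by
    intro x hx
    have hxpos : (0:ℝ) < x := hx
    have hAinv : (A + (x : ℂ) • 1)⁻¹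
        = u * diagonal (fun i => (((a i + x : ℝ) : ℂ))⁻¹) * star u := by
      rw [hAeq]
      exact conj_add_smul_one_inv u hu hu' a hapos x hxpos.le
    have hBinv : (B + (x : ℂ) • 1)⁻¹
        = v * diagonal (fun j => (((b j + x : ℝ) : ℂ))⁻¹) * star v := by
      rw [hBeq]
      exact conj_add_smul_one_inv v hv hv' b hbpos x hxpos.le
    rw [hAinv, hBinv,
      conj_mul_conj u v (u * Y * star v) (fun i => (((a i + x : ℝ) : ℂ))⁻¹)
        (fun j => (((b j + x : ℝ) : ℂ))⁻¹),
      unconj u v Y hu' hv']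
    refine Finset.sum_congr rfl fun i _ => Finset.sum_congr rfl fun j _ => ?_
    congr 1
    rw [mul_inv, Complex.ofReal_mul, Complex.ofReal_inv, Complex.ofReal_inv]
  have hintg : ∀ i j : Fin m,
      Integrable (fun x : ℝ => ((((a i + x) * (b j + x))⁻¹ : ℝ) : ℂ))
        (volume.restrict (Set.Ioi (0:ℝ))) :=
    fun i j => (integrableOn_inv_mul (hapos i) (hbpos j)).ofReal
  have hhat : matSharpHat A B (u * Y * star v)
      = u * Matrix.of (fun i j => (κ₂ i j : ℂ) * Y i j) * star v := by
    rw [matSharpHat, setIntegral_congr_fun measurableSet_Ioi hfun2]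
    calc (∫ x in Set.Ioi (0:ℝ), ∑ i, ∑ j, ((((a i + x) * (b j + x))⁻¹ : ℝ) : ℂ) •
            (u * single i j (Y i j) * star v))
        = ∑ i, ∑ j, (∫ x in Set.Ioi (0:ℝ), ((((a i + x) * (b j + x))⁻¹ : ℝ) : ℂ)) •
            (u * single i j (Y i j) * star v) := by
          rw [integral_finset_sum _ (fun i _ => integrable_finset_sum _
            (fun j _ => (hintg i j).smul_const _))]
          refine Finset.sum_congr rfl fun i _ => ?_
          rw [integral_finset_sum _ (fun j _ => (hintg i j).smul_const _)]
          refine Finset.sum_congr rfl fun j _ => ?_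
          exact integral_smul_const _ _
      _ = ∑ i, ∑ j, ((κ₂ i j : ℝ) : ℂ) • (u * single i j (Y i j) * star v) := by
          refine Finset.sum_congr rfl fun i _ => Finset.sum_congr rfl fun j _ => ?_
          congr 1
          exact integral_ofReal
      _ = u * Matrix.of (fun i j => (κ₂ i j : ℂ) * Y i j) * star v :=
          sum_smul_collect u v _ _
  rw [hsharp, hhat]
  have hent : Matrix.of (fun i j => (κ₂ i j : ℂ) * Y i j) = D := by
    ext i j
    show (κ₂ i j : ℂ) * ((κ₁ i j : ℂ) * D i j) = D i j
    rw [← mul_assoc, ← Complex.ofReal_mul, key_scalar (hapos i) (hbpos j)]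
    simp
  rw [hent, hD]
  calc u * (star u * C * v) * star v = u * star u * C * (v * star v) := by
        simp only [Matrix.mul_assoc]
    _ = C := by rw [hu, hv, one_mul, mul_one]

end MatSharpAux

/-- For strictly positive definite `A`, `B`, the map `(A,B)♯̂` inverts `(A,B)#`. -/
theorem matSharpHat_matSharp (A B : Matrix (Fin m) (Fin m) ℂ)
    (hA : A.PosDef) (hB : B.PosDef) (C : Matrix (Fin m) (Fin m) ℂ) :
    matSharpHat A B (matSharp A B C) = C := by
  exact MatSharpAux.aux A B
    (hA.1.eigenvectorUnitary : Matrix (Fin m) (Fin m) ℂ)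
    (hB.1.eigenvectorUnitary : Matrix (Fin m) (Fin m) ℂ)
    hA.1.eigenvalues hB.1.eigenvalues
    (Unitary.mul_star_self_of_mem (SetLike.coe_mem _))
    (Unitary.star_mul_self_of_mem (SetLike.coe_mem _))
    (Unitary.mul_star_self_of_mem (SetLike.coe_mem _))
    (Unitary.star_mul_self_of_mem (SetLike.coe_mem _))
    hA.eigenvalues_pos hB.eigenvalues_pos
    hA.1.spectral_theorem hB.1.spectral_theorem
    (fun f => hA.1.cfc_eq f) (fun f => hB.1.cfc_eq f) C
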